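/- In a linear SEM satisfying Assumption (A strictly lower triangular, Σ positive definite), let S ⊂ V \ {X_i}, and let S_2 = {X_q ∈ S : S \ {X_q} blocks every back-door path from X_q to X_i}. For X_q ∈ S_2 define the residualized variables X̃_q = X_q - Σ_{X_p ∈ S_1} τ_{qp|do(S_1\{X_p})} X_p and X̃_i = X_i - Σ_{X_k ∈ S} τ_{ik|do(S\{X_k})} X_k, where S_1 = S \ S_2. Then Cov(X̃_q, X̃_i) = 0. -/

import Mathlib

open scoped Classical

/-- Orientation of an edge along a path. -/
inductive EdgeDir
  | fwd  -- a → b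
  | bwd  -- a ← b
  | bi   -- a ↔ b
deriving DecidableEq

/-- An acyclic directed mixed graph: directed and bidirected edges on a vertex set. -/
structure ADMG (V : Type) where
  dir : V → V → Prop
  bidir : V → V → Prop

namespace ADMG

variable {V : Type} (G : ADMG V)

/-- `StepOK d a b` : the step from `a` to `b` along a path realizes the edge type `d`. -/
def StepOK : EdgeDir → V → V → Prop
  | .fwd, a, b => G.dir a b
  | .bwd, a, b => G.dir b a
  | .bi,  a, b => G.bidir a b

/-- A path in a mixed graph: a list of distinct vertices together with the orientation of
each consecutive edge. -/
structure GPath where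
  verts : List V
  dirs : List EdgeDir
  hlen : verts.length = dirs.length + 1
  nodup : verts.Nodup
  ok : ∀ k (h : k < dirs.length),
    G.StepOK (dirs.get ⟨k, h⟩) (verts.get ⟨k, by omega⟩) (verts.get ⟨k + 1, by omega⟩)

variable {G}

/-- First vertex of a path. -/
def GPath.first (p : G.GPath) : V := p.verts.get ⟨0, by have := p.hlen; omega⟩

/-- Last vertex of a path. -/
def GPath.last (p : G.GPath) : V :=
  p.verts.get ⟨p.dirs.length, by have := p.hlen; omega⟩

/-- The vertex at position `k` is a collider (both adjacent edges point into it). -/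
def GPath.ColliderAt (p : G.GPath) (k : ℕ) : Prop :=
  ∃ (hk : 0 < k) (h : k < p.dirs.length),
    (p.dirs.get ⟨k - 1, by omega⟩ = .fwd ∨ p.dirs.get ⟨k - 1, by omega⟩ = .bi) ∧
    (p.dirs.get ⟨k, h⟩ = .bwd ∨ p.dirs.get ⟨k, h⟩ = .bi)

/-- `b` is a descendant of `a` (there is a directed path from `a` to `b`). -/
def Desc (G : ADMG V) (a b : V) : Prop := Relation.TransGen G.dir a b

/-- `Z` blocks a path: either `Z` contains an interior non-collider, or some collider on
the path is such that neither it nor any of its descendants belongs to `Z`. -/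
def Blocks (Z : Set V) (p : G.GPath) : Prop :=
  (∃ k, ∃ _hk : 0 < k, ∃ h : k < p.dirs.length,
      ¬ p.ColliderAt k ∧ p.verts.get ⟨k, by have := p.hlen; omega⟩ ∈ Z)
  ∨ (∃ k, ∃ h : k < p.dirs.length, p.ColliderAt k ∧
      p.verts.get ⟨k, by have := p.hlen; omega⟩ ∉ Z ∧
      ∀ d, Desc G (p.verts.get ⟨k, by have := p.hlen; omega⟩) d → d ∉ Z)

/-- The path runs from `a` to `b`. -/
def GPath.IsBetween (p : G.GPath) (a b : V) : Prop := p.first = a ∧ p.last = b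

/-- A directed path from `a` to `b` (all edges oriented forward, nonempty). -/
def GPath.IsDirected (p : G.GPath) (a b : V) : Prop :=
  p.first = a ∧ p.last = b ∧ p.dirs ≠ [] ∧
    ∀ k (h : k < p.dirs.length), p.dirs.get ⟨k, h⟩ = .fwd

/-- A back-door path from `a` to `b` (first edge points into `a` or is bidirected). -/
def GPath.IsBackdoor (p : G.GPath) (a b : V) : Prop :=
  p.first = a ∧ p.last = b ∧ ∃ h : 0 < p.dirs.length,
    (p.dirs.get ⟨0, h⟩ = .bwd ∨ p.dirs.get ⟨0, h⟩ = .bi)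

/-- The path contains a v-structure. -/
def GPath.HasCollider (p : G.GPath) : Prop := ∃ k, p.ColliderAt k

/-- The selective-door criterion relative to `(j, i)`. -/
def SelectiveDoor (G : ADMG V) (Z : Set V) (j i : V) : Prop :=
  (∀ k ∈ Z, Desc G j k →
      (∃ q : G.GPath, q.IsDirected j k ∧ ¬ Blocks ((Z ∪ {j}) \ {k}) q) →
      ∀ p : G.GPath, p.IsBackdoor k i → Blocks (Z \ {k}) p)
  ∧ (∀ p : G.GPath, p.IsBackdoor j i → Blocks Z p)

/-- The back-door criterion relative to `(j, i)`. -/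
def BackdoorCrit (G : ADMG V) (Z : Set V) (j i : V) : Prop :=
  (∀ k ∈ Z, ¬ Desc G j k) ∧ ∀ p : G.GPath, p.IsBackdoor j i → Blocks Z p

end ADMG


open MeasureTheory

/-- The causal path diagram of a linear SEM with coefficient matrix `A` and error
covariance `Sg`: directed edge `a ⟶ b` iff `A b a ≠ 0`, bidirected edge iff the
corresponding error covariance is nonzero. -/
def diagram {N : ℕ} (A Sg : Matrix (Fin N) (Fin N) ℝ) : ADMG (Fin N) where
  dir := fun a b => A b a ≠ 0
  bidir := fun a b => a ≠ b ∧ Sg a b ≠ 0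

/-- The `Z`-controlled total effect of `X j` on `X i`: the `(i,j)` entry of `(I - A_Z)⁻¹`
where `A_Z` deletes all edges whose head lies in `Z`. -/
noncomputable def ctrlEffect {N : ℕ} (A : Matrix (Fin N) (Fin N) ℝ)
    (Z : Set (Fin N)) (i j : Fin N) : ℝ :=
  (1 - Matrix.of fun a b => if a ∈ Z then (0 : ℝ) else A a b)⁻¹ i j


namespace Aux17
open ADMG

variable {N : ℕ}

noncomputable def Am (A : Matrix (Fin N) (Fin N) ℝ) (Z : Set (Fin N)) : Matrix (Fin N) (Fin N) ℝ :=
  Matrix.of fun a b => if a ∈ Z then (0:ℝ) else A a b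

noncomputable def B (A : Matrix (Fin N) (Fin N) ℝ) (Z : Set (Fin N)) : Matrix (Fin N) (Fin N) ℝ :=
  ∑ k ∈ Finset.range N, (Am A Z)^k

variable {A : Matrix (Fin N) (Fin N) ℝ}

theorem Am_lower (hA : ∀ i j : Fin N, i ≤ j → A i j = 0) (Z : Set (Fin N)) :
    ∀ i j : Fin N, i ≤ j → Am A Z i j = 0 := by
  intro i j h
  simp only [Am, Matrix.of_apply, hA i j h, ite_self]

theorem pow_entry_bound {M : Matrix (Fin N) (Fin N) ℝ} (hM : ∀ i j : Fin N, i ≤ j → M i j = 0) :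
    ∀ k (i j : Fin N), (M^k) i j ≠ 0 → (j:ℕ) + k ≤ (i:ℕ) ∨ (k = 0 ∧ i = j) := by
  intro k
  induction k with
  | zero =>
      intro i j h
      rw [pow_zero, Matrix.one_apply] at h
      right; exact ⟨rfl, by by_contra hc; exact h (if_neg hc)⟩
  | succ n ih =>
    intro i j h
    rw [pow_succ, Matrix.mul_apply] at h
    obtain ⟨m, hm⟩ := Finset.exists_ne_zero_of_sum_ne_zero h
    have h1 : (M^n) i m ≠ 0 := fun hc => hm.2 (by simp [hc])
    have h2 : M m j ≠ 0 := fun hc => hm.2 (by simp [hc])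
    have hjm : (j:ℕ) < (m:ℕ) := by
      by_contra hc
      exact h2 (hM m j (by omega))
    rcases ih i m h1 with h3 | ⟨h3, rfl⟩
    · left; omega
    · left; omega

theorem pow_N_eq_zero {M : Matrix (Fin N) (Fin N) ℝ} (hM : ∀ i j : Fin N, i ≤ j → M i j = 0) :
    M ^ N = 0 := by
  ext i j
  by_contra h
  rcases pow_entry_bound hM N i j h with h1 | ⟨h1, _⟩
  · have := j.2; have := i.2; simp at h; omega
  · subst h1; have := i.2; omega

theorem B_mul (hA : ∀ i j : Fin N, i ≤ j → A i j = 0) (Z : Set (Fin N)) :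
    (1 - Am A Z) * B A Z = 1 := by
  have h0 := pow_N_eq_zero (Am_lower hA Z)
  have h := mul_geom_sum (Am A Z) N
  have h2 : (Am A Z - 1) * B A Z = (Am A Z)^N - 1 := h
  rw [h0] at h2
  calc (1 - Am A Z) * B A Z = -((Am A Z - 1) * B A Z) := by noncomm_ring
  _ = 1 := by rw [h2]; noncomm_ring

theorem mul_B (hA : ∀ i j : Fin N, i ≤ j → A i j = 0) (Z : Set (Fin N)) :
    B A Z * (1 - Am A Z) = 1 := by
  have h0 := pow_N_eq_zero (Am_lower hA Z)
  have h := geom_sum_mul (Am A Z) N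
  have h2 : B A Z * (Am A Z - 1) = (Am A Z)^N - 1 := h
  rw [h0] at h2
  calc B A Z * (1 - Am A Z) = -(B A Z * (Am A Z - 1)) := by noncomm_ring
  _ = 1 := by rw [h2]; noncomm_ring

theorem B_eq_inv (hA : ∀ i j : Fin N, i ≤ j → A i j = 0) (Z : Set (Fin N)) :
    (1 - Am A Z)⁻¹ = B A Z :=
  Matrix.inv_eq_right_inv (B_mul hA Z)

theorem B_entry_le (hA : ∀ i j : Fin N, i ≤ j → A i j = 0) (Z : Set (Fin N))
    {a b : Fin N} (h : B A Z a b ≠ 0) : b ≤ a := by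
  rw [B, Matrix.sum_apply] at h
  obtain ⟨k, hk⟩ := Finset.exists_ne_zero_of_sum_ne_zero h
  rcases pow_entry_bound (Am_lower hA Z) k a b hk.2 with h1 | ⟨_, rfl⟩
  · exact Fin.le_def.2 (by omega)
  · exact le_refl _

noncomputable def E (k : Fin N) : Matrix (Fin N) (Fin N) ℝ :=
  Matrix.of fun a b => if a = k ∧ b = k then (1:ℝ) else 0

theorem E_mul (k : Fin N) (M : Matrix (Fin N) (Fin N) ℝ) (a b : Fin N) :
    (E k * M) a b = if a = k then M k b else 0 := by
  by_cases ha : a = k <;>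
    simp [E, Matrix.mul_apply, ha, ite_and, boole_mul, Finset.sum_ite_eq]

theorem mul_E (k : Fin N) (M : Matrix (Fin N) (Fin N) ℝ) (a b : Fin N) :
    (M * E k) a b = if b = k then M a k else 0 := by
  by_cases hb : b = k <;>
    simp [E, Matrix.mul_apply, hb, ite_and, mul_ite, Finset.sum_ite_eq']

theorem AB_diag (hA : ∀ i j : Fin N, i ≤ j → A i j = 0) (Z : Set (Fin N)) (k : Fin N) :
    (A * B A Z) k k = 0 := by
  rw [Matrix.mul_apply]
  apply Finset.sum_eq_zero
  intro m _
  by_cases h1 : A k m = 0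
  · simp [h1]
  by_cases h2 : B A Z m k = 0
  · simp [h2]
  have hmk : m < k := by
    by_contra hc
    exact h1 (hA k m (le_of_not_gt hc))
  exact absurd (B_entry_le hA Z h2) (not_le.2 hmk)

theorem EABE (hA : ∀ i j : Fin N, i ≤ j → A i j = 0) (Z : Set (Fin N)) (k : Fin N) :
    E k * (A * B A Z) * E k = 0 := by
  ext a b
  rw [mul_E, E_mul]
  by_cases hb : b = k <;> by_cases ha : a = k <;> simp [ha, hb, AB_diag hA Z k]

theorem Am_split (S : Set (Fin N)) (k : Fin N) (hk : k ∈ S) :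
    Am A (S \ {k}) = Am A S + E k * A := by
  ext a b
  rw [Matrix.add_apply, E_mul]
  simp only [Am, Matrix.of_apply, Set.mem_diff, Set.mem_singleton_iff]
  by_cases ha : a = k
  · subst ha; simp [hk]
  · simp only [ha, if_false, add_zero]
    by_cases h : a ∈ S <;> simp [h, ha]

theorem B_del (hA : ∀ i j : Fin N, i ≤ j → A i j = 0) (S : Set (Fin N)) (k : Fin N) (hk : k ∈ S) :
    B A (S \ {k}) = (1 + B A S * E k * A) * B A S := by
  have key : (1 - Am A (S \ {k})) * ((1 + B A S * E k * A) * B A S) = 1 := by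
    have h1 : 1 - Am A (S \ {k}) = (1 - Am A S) - E k * A := by
      rw [Am_split S k hk]; noncomm_ring
    have h2 : (1 - Am A S) * B A S = 1 := B_mul hA S
    have h4 : E k * A * (B A S * E k * A) = 0 := by
      have h := EABE hA S k
      calc E k * A * (B A S * E k * A) = (E k * (A * B A S) * E k) * A := by noncomm_ring
      _ = 0 := by rw [h]; simp
    calc (1 - Am A (S \ {k})) * ((1 + B A S * E k * A) * B A S)
        = ((1 - Am A S) * (B A S * E k * A) + (1 - Am A S)
           - E k * A - E k * A * (B A S * E k * A)) * B A S := by rw [h1]; noncomm_ring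
    _ = ((1 - Am A S) * (B A S * E k * A) + (1 - Am A S) - E k * A) * B A S := by
          rw [h4]; noncomm_ring
    _ = (1 - Am A S) * B A S * (E k * A * B A S) + (1 - Am A S) * B A S
        - E k * A * B A S := by noncomm_ring
    _ = 1 := by rw [h2]; noncomm_ring
  have h5 := Matrix.inv_eq_right_inv key
  rw [← h5, B_eq_inv hA]

theorem B_del_entry (hA : ∀ i j : Fin N, i ≤ j → A i j = 0) (S : Set (Fin N)) (k : Fin N)
    (hk : k ∈ S) (i : Fin N) : B A (S \ {k}) i k = B A S i k := by
  rw [B_del hA S k hk]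
  have h : (1 + B A S * E k * A) * B A S = B A S + B A S * (E k * (A * B A S)) := by noncomm_ring
  rw [h, Matrix.add_apply, Matrix.mul_apply]
  have h2 : ∀ m ∈ Finset.univ, B A S i m * (E k * (A * B A S)) m k
      = B A S i m * (if m = k then (A * B A S) k k else 0) := by
    intro m _; rw [E_mul]
  rw [Finset.sum_congr rfl h2]
  simp [AB_diag hA S]

noncomputable def D (S : Set (Fin N)) : Matrix (Fin N) (Fin N) ℝ :=
  Matrix.of fun a b => if a = b ∧ a ∈ S then (1:ℝ) else 0

theorem D_mul (S : Set (Fin N)) (M : Matrix (Fin N) (Fin N) ℝ) (a b : Fin N) :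
    (D S * M) a b = if a ∈ S then M a b else 0 := by
  by_cases ha : a ∈ S <;>
    simp [D, Matrix.mul_apply, ha, ite_and, boole_mul, Finset.sum_ite_eq]

theorem mul_D (S : Set (Fin N)) (M : Matrix (Fin N) (Fin N) ℝ) (a b : Fin N) :
    (M * D S) a b = if b ∈ S then M a b else 0 := by
  by_cases hb : b ∈ S <;>
    simp [D, Matrix.mul_apply, hb, ite_and, mul_ite, Finset.sum_ite_eq']

theorem Am_empty : Am A (∅ : Set (Fin N)) = A := by
  ext a b; simp [Am]

theorem A_split (S : Set (Fin N)) : A = Am A S + D S * A := by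
  ext a b
  rw [Matrix.add_apply, D_mul]
  simp only [Am, Matrix.of_apply]
  by_cases h : a ∈ S <;> simp [h]

theorem resid_identity (hA : ∀ i j : Fin N, i ≤ j → A i j = 0) (S : Set (Fin N)) :
    B A ∅ - B A S * (D S * B A ∅) = B A S - B A S * D S := by
  have hB0 : (1 - A) * B A ∅ = 1 := by
    have h := B_mul hA (∅ : Set (Fin N)); rwa [Am_empty] at h
  have hBS : B A S * (1 - Am A S) = 1 := mul_B hA S
  have h2 : A * B A ∅ = B A ∅ - 1 := by
    have h : (1 - A) * B A ∅ = B A ∅ - A * B A ∅ := by noncomm_ring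
    rw [h] at hB0
    calc A * B A ∅ = B A ∅ - (B A ∅ - A * B A ∅) := by noncomm_ring
    _ = B A ∅ - 1 := by rw [hB0]
  have h3 : B A ∅ = B A S + B A S * (D S * (A * B A ∅)) := by
    have hsplit : (1 : Matrix (Fin N) (Fin N) ℝ) - Am A S = (1 - A) + D S * A := by
      have hx := A_split (A := A) S
      calc (1 : Matrix (Fin N) (Fin N) ℝ) - Am A S
          = 1 - (Am A S + D S * A) + D S * A := by noncomm_ring
      _ = (1 - A) + D S * A := by rw [← hx]
    have h : (1 - Am A S) * B A ∅ = 1 + D S * (A * B A ∅) := by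
      calc (1 - Am A S) * B A ∅ = (1 - A) * B A ∅ + D S * A * B A ∅ := by
            rw [hsplit]; noncomm_ring
      _ = 1 + D S * (A * B A ∅) := by rw [hB0]; noncomm_ring
    calc B A ∅ = (B A S * (1 - Am A S)) * B A ∅ := by rw [hBS]; noncomm_ring
    _ = B A S * ((1 - Am A S) * B A ∅) := by noncomm_ring
    _ = B A S + B A S * (D S * (A * B A ∅)) := by rw [h]; noncomm_ring
  calc B A ∅ - B A S * (D S * B A ∅)
      = B A S + B A S * (D S * (A * B A ∅)) - B A S * (D S * B A ∅) := by
        nth_rewrite 1 [h3]; rfl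
  _ = B A S + B A S * (D S * (B A ∅ - 1)) - B A S * (D S * B A ∅) := by rw [h2]
  _ = B A S - B A S * D S := by noncomm_ring

theorem coeff_identity (hA : ∀ i j : Fin N, i ≤ j → A i j = 0) (S : Set (Fin N)) (i l : Fin N) :
    B A ∅ i l - ∑ k, (if k ∈ S then B A S i k * B A ∅ k l else 0)
    = if l ∈ S then 0 else B A S i l := by
  have h := congrFun (congrFun (resid_identity hA S) i) l
  rw [Matrix.sub_apply, Matrix.sub_apply] at h
  have h1 : (B A S * (D S * B A ∅)) i l
      = ∑ k, (if k ∈ S then B A S i k * B A ∅ k l else 0) := by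
    rw [Matrix.mul_apply]
    refine Finset.sum_congr rfl fun k _ => ?_
    rw [D_mul]
    by_cases hk : k ∈ S <;> simp [hk]
  have h2 : (B A S * D S) i l = if l ∈ S then B A S i l else 0 := mul_D S _ i l
  rw [h1, h2] at h
  rw [h]
  by_cases hl : l ∈ S <;> simp [hl]

theorem tilde_repr (hA : ∀ i j : Fin N, i ≤ j → A i j = 0) (S : Set (Fin N)) (i : Fin N)
    (u x : Fin N → ℝ) (hx : x = (B A ∅).mulVec u) :
    x i - ∑ k, (if k ∈ S then B A (S \ {k}) i k * x k else 0)
      = ∑ l, (if l ∈ S then 0 else B A S i l) * u l := by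
  subst hx
  have hXl : ∀ j, (B A ∅).mulVec u j = ∑ l, B A ∅ j l * u l := fun j => rfl
  have hsum : ∀ k, (if k ∈ S then B A (S \ {k}) i k * (B A ∅).mulVec u k else 0)
      = ∑ l, (if k ∈ S then B A S i k * B A ∅ k l else 0) * u l := by
    intro k
    by_cases hk : k ∈ S
    · simp only [hk, if_true, hXl k, B_del_entry hA S k hk, Finset.mul_sum]
      refine Finset.sum_congr rfl fun l _ => by ring
    · simp [hk]
  rw [Finset.sum_congr rfl (fun k _ => hsum k), Finset.sum_comm, hXl i, ← Finset.sum_sub_distrib]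
  refine Finset.sum_congr rfl fun l _ => ?_
  rw [← Finset.sum_mul, ← sub_mul, coeff_identity hA S i l]

theorem X_eq (hA : ∀ i j : Fin N, i ≤ j → A i j = 0) (x u : Fin N → ℝ)
    (h : x = A.mulVec x + u) : x = (B A ∅).mulVec u := by
  have h1 : (1 - A).mulVec x = u := by
    rw [Matrix.sub_mulVec, Matrix.one_mulVec]
    nth_rewrite 1 [h]
    ext j
    simp [Pi.add_apply, Pi.sub_apply]
  have hB0 : B A ∅ * (1 - A) = 1 := by
    have hm := mul_B hA (∅ : Set (Fin N)); rwa [Am_empty] at hm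
  calc x = (1 : Matrix (Fin N) (Fin N) ℝ).mulVec x := by rw [Matrix.one_mulVec]
  _ = (B A ∅ * (1 - A)).mulVec x := by rw [hB0]
  _ = (B A ∅).mulVec ((1 - A).mulVec x) := by rw [Matrix.mulVec_mulVec]
  _ = (B A ∅).mulVec u := by rw [h1]


/-- extract a chain of vertices from a nonzero entry of a power -/
theorem chain_of_pow {A : Matrix (Fin N) (Fin N) ℝ} {Z : Set (Fin N)} :
    ∀ (k : ℕ) (j l : Fin N), ((Am A Z)^k) j l ≠ 0 →
    ∃ L : List (Fin N), L.head? = some l ∧ L.getLast? = some j ∧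
      L.Chain' (fun a b => A b a ≠ 0 ∧ b ∉ Z) := by
  intro k
  induction k with
  | zero =>
    intro j l h
    rw [pow_zero, Matrix.one_apply] at h
    have : j = l := by by_contra hc; exact h (if_neg hc)
    subst this
    exact ⟨[j], rfl, rfl, List.isChain_singleton j⟩
  | succ n ih =>
    intro j l h
    rw [pow_succ, Matrix.mul_apply] at h
    obtain ⟨m', hm⟩ := Finset.exists_ne_zero_of_sum_ne_zero h
    have h1 : ((Am A Z)^n) j m' ≠ 0 := fun hc => hm.2 (by simp [hc])
    have h2 : Am A Z m' l ≠ 0 := fun hc => hm.2 (by simp [hc])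
    have h3 : m' ∉ Z ∧ A m' l ≠ 0 := by
      by_cases hz : m' ∈ Z
      · exact absurd (by simp [Am, hz]) h2
      · refine ⟨hz, fun hc => h2 (by simp [Am, hz, hc])⟩
    obtain ⟨L, hh, hl2, hch⟩ := ih j m' h1
    obtain ⟨t, rfl⟩ := List.head?_eq_some_iff.mp hh
    refine ⟨l :: m' :: t, rfl, ?_, ?_⟩
    · rw [List.getLast?_cons_cons]; exact hl2
    · refine List.isChain_cons_cons.mpr ?_
      exact ⟨⟨h3.2, h3.1⟩, hch⟩

theorem chain_of_B {A : Matrix (Fin N) (Fin N) ℝ} {Z : Set (Fin N)} {j l : Fin N}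
    (h : B A Z j l ≠ 0) :
    ∃ L : List (Fin N), L.head? = some l ∧ L.getLast? = some j ∧
      L.Chain' (fun a b => A b a ≠ 0 ∧ b ∉ Z) := by
  rw [B, Matrix.sum_apply] at h
  obtain ⟨k, hk⟩ := Finset.exists_ne_zero_of_sum_ne_zero h
  exact chain_of_pow k j l hk.2

/-- split a list at the first element satisfying P -/
theorem split_first {α : Type*} (P : α → Prop) :
    ∀ (L : List α), (∃ x ∈ L, P x) →
    ∃ pre c post, L = pre ++ c :: post ∧ P c ∧ ∀ x ∈ pre, ¬ P x := by
  intro L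
  induction L with
  | nil => rintro ⟨x, hx, _⟩; exact absurd hx ((List.not_mem_nil (a := x)))
  | cons a t ih =>
    intro hex
    by_cases ha : P a
    · exact ⟨[], a, t, rfl, ha, by simp⟩
    · have : ∃ x ∈ t, P x := by
        obtain ⟨x, hx, hPx⟩ := hex
        rcases List.mem_cons.mp hx with rfl | hxt
        · exact absurd hPx ha
        · exact ⟨x, hxt, hPx⟩
      obtain ⟨pre, c, post, heq, hc, hpre⟩ := ih this
      exact ⟨a :: pre, c, post, by rw [heq]; rfl, hc, by
        intro x hx
        rcases List.mem_cons.mp hx with rfl | hxp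
        · exact ha
        · exact hpre x hxp⟩

theorem chain_all {α : Type*} {R : α → α → Prop} {P : α → Prop} (hR : ∀ a b, R a b → P b) :
    ∀ (L : List α) (h0 : α), L.Chain' R → L.head? = some h0 → P h0 → ∀ x ∈ L, P x := by
  intro L
  induction L with
  | nil => intro h0 _ _ _ x hx; exact absurd hx ((List.not_mem_nil (a := x)))
  | cons a t ih =>
    intro h0 hch hh hP x hx
    have ha : a = h0 := by simpa using hh
    subst ha
    rcases List.mem_cons.mp hx with rfl | hxt
    · exact hP
    · cases t with
      | nil => exact absurd hxt ((List.not_mem_nil (a := x)))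
      | cons b t' =>
        have hch' := (List.isChain_cons_cons.mp hch)
        exact ih b hch'.2 rfl (hR a b hch'.1) x hxt

section Paths
variable {V : Type} {G : ADMG V}

theorem first_eq {p : G.GPath} {x : V} (h : p.verts.head? = some x) : p.first = x := by
  obtain ⟨t, ht⟩ := List.head?_eq_some_iff.mp h
  simp [ADMG.GPath.first, ht]

theorem last_eq {p : G.GPath} {x : V} (h : p.verts.getLast? = some x) : p.last = x := by
  have hl := p.hlen
  have h1 : p.verts.getLast? = p.verts[p.verts.length - 1]? := List.getLast?_eq_getElem?
  have h2 : p.verts.length - 1 = p.dirs.length := by omega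
  rw [h2, h, List.getElem?_eq_getElem (by omega)] at h1
  have h3 : x = p.verts[p.dirs.length] := by
    exact Option.some_injective _ h1
  rw [h3]
  rfl

theorem first_congr {p p' : G.GPath} (h : p.verts = p'.verts) : p.first = p'.first := by
  have h1 := p.hlen
  simp only [ADMG.GPath.first, List.get_eq_getElem, h]

def nilPath (G : ADMG V) (v : V) : G.GPath where
  verts := [v]
  dirs := []
  hlen := rfl
  nodup := List.nodup_singleton v
  ok := by intro k h; simp at h

@[simp] theorem nilPath_verts (v : V) : (nilPath G v).verts = [v] := rfl
@[simp] theorem nilPath_dirs (v : V) : (nilPath G v).dirs = ([] : List EdgeDir) := rfl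

def consPath (a : V) (d : EdgeDir) (p : G.GPath)
    (h1 : G.StepOK d a p.first) (h2 : a ∉ p.verts) : G.GPath where
  verts := a :: p.verts
  dirs := d :: p.dirs
  hlen := by simp [p.hlen]
  nodup := List.nodup_cons.mpr ⟨h2, p.nodup⟩
  ok := by
    intro k h
    match k with
    | 0 => exact h1
    | k + 1 => exact p.ok k (by simpa using h)

@[simp] theorem consPath_verts (a : V) (d : EdgeDir) (p : G.GPath) (h1) (h2) :
    (consPath a d p h1 h2).verts = a :: p.verts := rfl
@[simp] theorem consPath_dirs (a : V) (d : EdgeDir) (p : G.GPath) (h1) (h2) :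
    (consPath a d p h1 h2).dirs = d :: p.dirs := rfl

theorem exists_fwd_path :
    ∀ (L : List V), L ≠ [] → L.Nodup → L.Chain' (fun a b => G.dir a b) →
    ∃ p : G.GPath, p.verts = L ∧ p.dirs = List.replicate (L.length - 1) EdgeDir.fwd := by
  intro L
  induction L with
  | nil => intro h; exact absurd rfl h
  | cons a t ih =>
    intro _ hnd hch
    cases t with
    | nil => exact ⟨nilPath G a, rfl, rfl⟩
    | cons b t' =>
      obtain ⟨p, hpv, hpd⟩ := ih (by simp) (List.Nodup.of_cons hnd) (List.isChain_cons_cons.mp hch).2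
      have hfirst : p.first = b := first_eq (by rw [hpv]; rfl)
      have h1 : G.StepOK EdgeDir.fwd a p.first := by
        rw [hfirst]; exact (List.isChain_cons_cons.mp hch).1
      have h2 : a ∉ p.verts := by rw [hpv]; exact (List.nodup_cons.mp hnd).1
      refine ⟨consPath a .fwd p h1 h2, by simp [hpv], ?_⟩
      simp [hpd, List.replicate_succ, Nat.succ_sub_one]

theorem exists_prepend_bwd :
    ∀ (xs : List V) (p : G.GPath),
    List.Chain' (fun a b => G.dir b a) (xs ++ [p.first]) → (xs ++ p.verts).Nodup →
    ∃ p' : G.GPath, p'.verts = xs ++ p.verts ∧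
      p'.dirs = List.replicate xs.length EdgeDir.bwd ++ p.dirs := by
  intro xs
  induction xs with
  | nil => intro p _ _; exact ⟨p, by simp, by simp⟩
  | cons x xs ih =>
    intro p hch hnd
    have hch' : List.Chain' (fun a b => G.dir b a) (xs ++ [p.first]) :=
      (List.isChain_cons.mp hch).2
    obtain ⟨p', hpv, hpd⟩ := ih p hch' (List.Nodup.of_cons hnd)
    have hfirst : p'.first = (xs ++ [p.first]).head (by simp) := by
      cases xs with
      | nil =>
        have : p'.verts = p.verts := by rw [hpv]; simp
        rw [first_congr this]; rfl
      | cons y ys =>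
        have : p'.verts.head? = some y := by rw [hpv]; rfl
        rw [first_eq this]; rfl
    have h1 : G.StepOK EdgeDir.bwd x p'.first := by
      have := (List.isChain_cons.mp hch).1 ((xs ++ [p.first]).head (by simp))
        (List.head?_eq_head _)
      rw [hfirst]
      exact this
    have h2 : x ∉ p'.verts := by rw [hpv]; exact (List.nodup_cons.mp hnd).1
    refine ⟨consPath x .bwd p' h1 h2, by simp [hpv], ?_⟩
    simp [hpd, List.replicate_succ]

theorem pattern_facts (a b : ℕ) (mids : List EdgeDir) (hm : mids = [] ∨ mids = [EdgeDir.bi])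
    (j : ℕ) :
    ((List.replicate a EdgeDir.bwd ++ (mids ++ List.replicate b EdgeDir.fwd))[j]?
        = some EdgeDir.bwd ↔ j < a)
    ∧ ((List.replicate a EdgeDir.bwd ++ (mids ++ List.replicate b EdgeDir.fwd))[j]?
        = some EdgeDir.bi → j = a) := by
  by_cases hj : j < a
  · rw [List.getElem?_append_left (by simpa using hj), List.getElem?_replicate, if_pos hj]
    refine ⟨⟨fun _ => hj, fun _ => rfl⟩, fun hc => by simp at hc⟩
  · rw [List.getElem?_append_right (by simpa using Nat.le_of_not_lt hj)]
    simp only [List.length_replicate]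
    rcases hm with rfl | rfl
    · rw [List.nil_append, List.getElem?_replicate]
      refine ⟨⟨fun hc => ?_, fun hc => absurd hc hj⟩, fun hc => ?_⟩ <;>
        · split at hc <;> simp at hc
    · rw [List.singleton_append]
      by_cases hja : j - a = 0
      · rw [hja, List.getElem?_cons_zero]
        refine ⟨⟨fun hc => by simp at hc, fun hc => absurd hc hj⟩, fun _ => by omega⟩
      · obtain ⟨k, hk⟩ : ∃ k, j - a = k + 1 := ⟨j - a - 1, by omega⟩
        rw [hk, List.getElem?_cons_succ, List.getElem?_replicate]
        refine ⟨⟨fun hc => ?_, fun hc => absurd hc hj⟩, fun hc => ?_⟩ <;>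
          · split at hc <;> simp at hc

theorem no_collider_of_pattern (p : G.GPath) (a b : ℕ) (mids : List EdgeDir)
    (hm : mids = [] ∨ mids = [EdgeDir.bi])
    (hd : p.dirs = List.replicate a EdgeDir.bwd ++ (mids ++ List.replicate b EdgeDir.fwd)) :
    ∀ k, ¬ p.ColliderAt k := by
  rintro k ⟨hk0, hk, h1, h2⟩
  have hk1 : k - 1 < p.dirs.length := by omega
  obtain ⟨x1, hx1⟩ : ∃ x, p.dirs.get ⟨k-1, hk1⟩ = x := ⟨_, rfl⟩
  obtain ⟨x2, hx2⟩ : ∃ x, p.dirs.get ⟨k, hk⟩ = x := ⟨_, rfl⟩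
  rw [hx1] at h1
  rw [hx2] at h2
  have e1 : p.dirs[k-1]? = some x1 := by
    rw [List.getElem?_eq_getElem hk1]
    rw [← hx1]
    simp
  have e2 : p.dirs[k]? = some x2 := by
    rw [List.getElem?_eq_getElem hk]
    rw [← hx2]
    simp
  rw [hd] at e1 e2
  have f1 := pattern_facts a b mids hm (k-1)
  have f2 := pattern_facts a b mids hm k
  have hka : k ≤ a := by
    rcases h2 with h2 | h2
    · rw [h2] at e2; exact Nat.le_of_lt (f2.1.mp e2)
    · rw [h2] at e2; exact Nat.le_of_eq (f2.2 e2)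
  have hbwd : x1 = EdgeDir.bwd := by
    have h3 := f1.1.mpr (by omega)
    rw [e1] at h3
    exact (Option.some_injective _ h3)
  rcases h1 with h1 | h1 <;> rw [hbwd] at h1 <;> cases h1

theorem not_blocks (p : G.GPath) (Z : Set V)
    (hnc : ∀ k, ¬ p.ColliderAt k)
    (hint : ∀ k, 0 < k → (h : k < p.dirs.length) →
      p.verts.get ⟨k, by have := p.hlen; omega⟩ ∉ Z) :
    ¬ ADMG.Blocks Z p := by
  rintro (⟨k, h0, h, _, hmem⟩ | ⟨k, h, hcol, _⟩)
  · exact hint k h0 h hmem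
  · exact hnc k hcol

theorem first_dir_pattern (p : G.GPath) (a b : ℕ) (mids : List EdgeDir)
    (hm : mids = [] ∨ mids = [EdgeDir.bi]) (hpos : 0 < a ∨ mids = [EdgeDir.bi])
    (hd : p.dirs = List.replicate a EdgeDir.bwd ++ (mids ++ List.replicate b EdgeDir.fwd))
    (h : 0 < p.dirs.length) :
    p.dirs.get ⟨0, h⟩ = EdgeDir.bwd ∨ p.dirs.get ⟨0, h⟩ = EdgeDir.bi := by
  obtain ⟨x0, hx0⟩ : ∃ x, p.dirs.get ⟨0, h⟩ = x := ⟨_, rfl⟩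
  rw [hx0]
  have e : p.dirs[0]? = some x0 := by
    rw [List.getElem?_eq_getElem h]
    rw [← hx0]
    simp
  rw [hd] at e
  rcases hpos with hpos | rfl
  · left
    have h3 := (pattern_facts a b mids hm 0).1.mpr hpos
    rw [e] at h3
    exact (Option.some_injective _ h3)
  · by_cases ha : 0 < a
    · left
      have h3 := (pattern_facts a b [EdgeDir.bi] hm 0).1.mpr ha
      rw [e] at h3
      exact (Option.some_injective _ h3)
    · right
      obtain rfl : a = 0 := by omega
      rw [List.replicate_zero, List.nil_append, List.singleton_append,
        List.getElem?_cons_zero] at e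
      exact (Option.some_injective _ e.symm)

end Paths

theorem graph_contradiction
    {N : ℕ} {A Sg : Matrix (Fin N) (Fin N) ℝ}
    (hA : ∀ i j : Fin N, i ≤ j → A i j = 0)
    (i : Fin N) (S S₁ S₂ : Set (Fin N))
    (hS₂ : S₂ = {q ∈ S | ∀ p : (diagram A Sg).GPath, p.IsBackdoor q i →
      ADMG.Blocks (S \ {q}) p})
    (hS₁ : S₁ = S \ S₂)
    (q : Fin N) (hq : q ∈ S₂)
    (l m : Fin N) (hl : l ∉ S₁) (hm : m ∉ S)
    (hv : B A S₁ q l ≠ 0) (hw : B A S i m ≠ 0) (hσ : Sg l m ≠ 0) : False := by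
  classical
  -- chains
  obtain ⟨Lc, hLh, hLl, hLch⟩ := chain_of_B hv
  obtain ⟨Rc, hRh, hRl, hRch⟩ := chain_of_B hw
  -- basic facts
  have hdirL : ∀ a b : Fin N, (A b a ≠ 0 ∧ b ∉ S₁) → a < b := by
    intro a b hab
    by_contra hc
    exact hab.1 (hA b a (le_of_not_gt hc))
  have hdirR : ∀ a b : Fin N, (A b a ≠ 0 ∧ b ∉ S) → a < b := by
    intro a b hab
    by_contra hc
    exact hab.1 (hA b a (le_of_not_gt hc))
  have hLnd : Lc.Nodup :=
    ((List.isChain_iff_pairwise.mp (hLch.imp fun {a b} hab => hdirL a b hab)).imp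
      fun {a b} hab => ne_of_lt hab)
  have hRnd : Rc.Nodup :=
    ((List.isChain_iff_pairwise.mp (hRch.imp fun {a b} hab => hdirR a b hab)).imp
      fun {a b} hab => ne_of_lt hab)
  have hRS : ∀ x ∈ Rc, x ∉ S := chain_all (fun a b hab => hab.2) Rc m hRch hRh hm
  have hLS₁ : ∀ x ∈ Lc, x ∉ S₁ := chain_all (fun a b hab => hab.2) Lc l hLch hLh hl
  -- split at first S₂ element
  have hqLc : q ∈ Lc := List.mem_of_getLast? hLl
  obtain ⟨pre, q', post, hLeq, hq', hpre⟩ := split_first (· ∈ S₂) Lc ⟨q, hqLc, hq⟩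
  have hq'S : q' ∈ S := by
    rw [hS₂] at hq'; exact hq'.1
  have hq'block : ∀ p : (diagram A Sg).GPath, p.IsBackdoor q' i →
      ADMG.Blocks (S \ {q'}) p := by
    rw [hS₂] at hq'; exact hq'.2
  set LL : List (Fin N) := pre ++ [q'] with hLL
  have hLceq : Lc = LL ++ post := by rw [hLeq, hLL]; simp
  have hLLne : LL ≠ [] := by simp [hLL]
  have hLLch : LL.Chain' (fun a b => A b a ≠ 0 ∧ b ∉ S₁) := by
    rw [hLceq] at hLch
    exact (List.isChain_append.mp hLch).1
  have hLLnd : LL.Nodup := by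
    rw [hLceq] at hLnd
    exact (List.nodup_append.mp hLnd).1
  have hLLh : LL.head? = some l := by
    rw [hLceq] at hLh
    rwa [List.head?_append_of_ne_nil _ hLLne] at hLh
  have hLLl : LL.getLast? = some q' := by
    rw [hLL]
    exact List.getLast?_concat
  -- membership property of LL
  have hLLmem : ∀ x ∈ LL, x ≠ q' → x ∉ S := by
    intro x hx hxq hxS
    rcases List.mem_append.mp hx with hxp | hxq'
    · have hx1 : x ∉ S₁ := hLS₁ x (by rw [hLceq]; exact List.mem_append_left _ (List.mem_append_left _ hxp))
      have hx2 : x ∉ S₂ := hpre x hxp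
      rw [hS₁] at hx1
      exact hx1 ⟨hxS, hx2⟩
    · exact hxq (by simpa using hxq')
  -- reversed left list
  set LP : List (Fin N) := LL.reverse with hLP
  have hLPh : LP.head? = some q' := by rw [hLP, List.head?_reverse]; exact hLLl
  have hLPl : LP.getLast? = some l := by rw [hLP, List.getLast?_reverse]; exact hLLh
  have hLPnd : LP.Nodup := by rw [hLP]; exact List.nodup_reverse.mpr hLLnd
  have hLPch : LP.Chain' (fun a b : Fin N => A a b ≠ 0 ∧ a ∉ S₁) := by
    rw [hLP]
    exact List.isChain_reverse.mpr hLLch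
  have hLPmem : ∀ x ∈ LP, x ≠ q' → x ∉ S := by
    intro x hx
    exact hLLmem x (by rw [hLP] at hx; exact List.mem_reverse.mp hx)
  have hq'Rc : q' ∉ Rc := fun hc => hRS q' hc hq'S
  have hRcne : Rc ≠ [] := by
    intro hc; rw [hc] at hRh; simp at hRh
  -- common closing argument
  have finish : ∀ (ps : (diagram A Sg).GPath) (a b : ℕ) (mids : List EdgeDir),
      (mids = [] ∨ mids = [EdgeDir.bi]) → (0 < a ∨ mids = [EdgeDir.bi]) →
      ps.dirs = List.replicate a EdgeDir.bwd ++ (mids ++ List.replicate b EdgeDir.fwd) →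
      ps.verts.head? = some q' → ps.verts.getLast? = some i →
      (∀ x ∈ ps.verts, x ≠ q' → x ∉ S) → False := by
    intro ps a b mids hm hpos hdirs hVh hVl hVmem
    have hfirst : ps.first = q' := first_eq hVh
    have hlast : ps.last = i := last_eq hVl
    have hlen0 : 0 < ps.dirs.length := by
      rw [hdirs]
      rcases hpos with hpos | rfl <;> simp <;> omega
    have hbd : ps.IsBackdoor q' i :=
      ⟨hfirst, hlast, hlen0, first_dir_pattern ps a b mids hm hpos hdirs hlen0⟩
    have hnb : ¬ ADMG.Blocks (S \ {q'}) ps := by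
      apply not_blocks ps _ (no_collider_of_pattern ps a b mids hm hdirs)
      intro k hk h hmem
      have hx : ps.verts.get ⟨k, by have := ps.hlen; omega⟩ ∈ ps.verts := by
        apply List.get_mem
      obtain ⟨hxS, hxq⟩ := hmem
      exact (hVmem _ hx (by simpa using hxq)) hxS
    exact hnb (hq'block ps hbd)
  by_cases hex : ∃ x ∈ LP, x ∈ Rc
  · -- Case A : the two chains intersect
    obtain ⟨pre2, c, post2, hLPeq, hcR, hpre2⟩ := split_first (· ∈ Rc) LP hex
    obtain ⟨rpre, rpost, hRceq⟩ := List.append_of_mem hcR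
    have hRsufch : (c :: rpost).Chain' (fun a b => A b a ≠ 0 ∧ b ∉ S) := by
      rw [hRceq] at hRch
      exact (List.isChain_append.mp hRch).2.1
    have hRsufnd : (c :: rpost).Nodup := by
      rw [hRceq] at hRnd
      exact (List.nodup_append.mp hRnd).2.1
    obtain ⟨pR, hpRv, hpRd⟩ := exists_fwd_path (G := diagram A Sg) (c :: rpost) (by simp)
      hRsufnd (hRsufch.imp (fun a b hab => hab.1))
    have hpRfirst : pR.first = c := first_eq (by rw [hpRv]; rfl)
    have hLPeq' : LP = (pre2 ++ [c]) ++ post2 := by rw [hLPeq]; simp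
    have hchain2 : (pre2 ++ [pR.first]).Chain' (fun a b => (diagram A Sg).dir b a) := by
      rw [hpRfirst]
      have hc2 := hLPch
      rw [hLPeq'] at hc2
      exact ((List.isChain_append.mp hc2).1).imp (fun a b hab => hab.1)
    have hnd2 : (pre2 ++ pR.verts).Nodup := by
      rw [hpRv]
      apply List.nodup_append'.mpr
      refine ⟨?_, hRsufnd, ?_⟩
      · rw [hLPeq] at hLPnd
        exact (List.nodup_append.mp hLPnd).1
      · intro x hx1 hx2
        exact hpre2 x hx1 (by rw [hRceq]; exact List.mem_append_right _ hx2)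
    obtain ⟨ps, hpsv, hpsd⟩ := exists_prepend_bwd pre2 pR hchain2 hnd2
    have hpre2ne : pre2 ≠ [] := by
      intro hc
      rw [hc] at hLPeq
      simp at hLPeq
      have hqc : q' = c := by
        rw [hLPeq] at hLPh
        exact (by simpa using hLPh : c = q').symm
      exact hq'Rc (hqc ▸ hcR)
    refine finish ps pre2.length rpost.length [] (Or.inl rfl)
      (Or.inl (List.length_pos_iff.mpr hpre2ne)) ?_ ?_ ?_ ?_
    · rw [hpsd, hpRd]
      simp
    · rw [hpsv]
      rw [List.head?_append_of_ne_nil _ hpre2ne]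
      rw [hLPeq] at hLPh
      rwa [List.head?_append_of_ne_nil _ hpre2ne] at hLPh
    · rw [hpsv, hpRv]
      rw [List.getLast?_append_of_ne_nil _ (by simp : (c :: rpost) ≠ [])]
      rw [hRceq] at hRl
      rwa [List.getLast?_append_of_ne_nil _ (by simp : (c :: rpost) ≠ [])] at hRl
    · rw [hpsv, hpRv]
      intro x hx hxq
      rcases List.mem_append.mp hx with hx1 | hx2
      · exact hLPmem x (by rw [hLPeq]; exact List.mem_append_left _ hx1) hxq
      · exact hRS x (by rw [hRceq]; exact List.mem_append_right _ hx2)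
  · -- Case B : disjoint, use the bidirected edge
    have hdisj : ∀ x ∈ LP, x ∉ Rc := fun x hx hR => hex ⟨x, hx, hR⟩
    obtain ⟨pR, hpRv, hpRd⟩ := exists_fwd_path (G := diagram A Sg) Rc hRcne hRnd
      (hRch.imp (fun a b hab => hab.1))
    have hpRfirst : pR.first = m := first_eq (by rw [hpRv]; exact hRh)
    have hlLP : l ∈ LP := List.mem_of_getLast? hLPl
    have hmRc : m ∈ Rc := by
      obtain ⟨t, ht⟩ := List.head?_eq_some_iff.mp hRh
      rw [ht]
      exact List.mem_cons_self
    have hlm : l ≠ m := fun hc => hdisj l hlLP (hc ▸ hmRc)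
    have hstep : (diagram A Sg).StepOK EdgeDir.bi l pR.first := by
      rw [hpRfirst]
      exact ⟨hlm, hσ⟩
    have hlnot : l ∉ pR.verts := by
      rw [hpRv]
      exact hdisj l hlLP
    have hLPeq2 : LP.dropLast ++ [l] = LP :=
      List.dropLast_append_getLast? l hLPl
    have hchain2 : (LP.dropLast ++ [(consPath l EdgeDir.bi pR hstep hlnot).first]).Chain'
        (fun a b => (diagram A Sg).dir b a) := by
      have hf : (consPath l EdgeDir.bi pR hstep hlnot).first = l := first_eq rfl
      rw [hf, hLPeq2]
      exact hLPch.imp (fun a b hab => hab.1)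
    have hndLP2 : (LP.dropLast ++ [l]).Nodup := by rw [hLPeq2]; exact hLPnd
    have hnd2 : (LP.dropLast ++ (consPath l EdgeDir.bi pR hstep hlnot).verts).Nodup := by
      rw [consPath_verts, hpRv]
      apply List.nodup_append'.mpr
      refine ⟨(List.nodup_append.mp hndLP2).1, ?_, ?_⟩
      · exact List.nodup_cons.mpr ⟨hdisj l hlLP, hRnd⟩
      · intro x hx1 hx2
        have hxLP : x ∈ LP := by
          rw [← hLPeq2]
          exact List.mem_append_left _ hx1
        rcases List.mem_cons.mp hx2 with rfl | hx3
        · exact (List.nodup_append'.mp hndLP2).2.2 hx1 (List.mem_singleton_self x)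
        · exact hdisj x hxLP hx3
    obtain ⟨ps, hpsv, hpsd⟩ := exists_prepend_bwd LP.dropLast _ hchain2 hnd2
    have hv2 : ps.verts = LP ++ Rc := by
      rw [hpsv, consPath_verts, hpRv, List.append_cons, hLPeq2]
    have hLPne : LP ≠ [] := by
      intro hc
      rw [hc] at hLPh
      simp at hLPh
    refine finish ps LP.dropLast.length (Rc.length - 1) [EdgeDir.bi] (Or.inr rfl)
      (Or.inr rfl) ?_ ?_ ?_ ?_
    · rw [hpsd, consPath_dirs, hpRd]
      simp
    · rw [hv2]
      rwa [List.head?_append_of_ne_nil _ hLPne]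
    · rw [hv2]
      rwa [List.getLast?_append_of_ne_nil _ hRcne]
    · rw [hv2]
      intro x hx hxq
      rcases List.mem_append.mp hx with hx1 | hx2
      · exact hLPmem x hx1 hxq
      · exact hRS x hx2


variable {N : ℕ} {Ω : Type*} [MeasurableSpace Ω] {μ : Measure Ω} [IsProbabilityMeasure μ]

theorem cov_uu (u : Ω → Fin N → ℝ) (hu1 : ∀ i, Integrable (fun ω => u ω i) μ)
    (hu2 : ∀ i j, Integrable (fun ω => u ω i * u ω j) μ) (l m : Fin N) :
    ∫ ω, (u ω l - ∫ ω', u ω' l ∂μ) * (u ω m - ∫ ω', u ω' m ∂μ) ∂μ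
      = (∫ ω, u ω l * u ω m ∂μ) - (∫ ω, u ω l ∂μ) * (∫ ω, u ω m ∂μ) := by
  set a := ∫ ω', u ω' l ∂μ
  set b := ∫ ω', u ω' m ∂μ
  have hfun : ∀ ω, (u ω l - a) * (u ω m - b)
      = u ω l * u ω m - a * u ω m - b * u ω l + a * b := fun ω => by ring
  rw [integral_congr_ae (Filter.Eventually.of_forall hfun)]
  rw [integral_add, integral_sub, integral_sub]
  · rw [integral_const_mul, integral_const_mul, integral_const]
    simp only [probReal_univ, one_smul]
    ring
  · exact hu2 l m
  · exact (hu1 m).const_mul a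
  · exact (hu2 l m).sub ((hu1 m).const_mul a)
  · exact (hu1 l).const_mul b
  · exact ((hu2 l m).sub ((hu1 m).const_mul a)).sub ((hu1 l).const_mul b)
  · exact integrable_const _

theorem int_sum (u : Ω → Fin N → ℝ) (hu1 : ∀ i, Integrable (fun ω => u ω i) μ)
    (v : Fin N → ℝ) :
    ∫ ω, ∑ l, v l * u ω l ∂μ = ∑ l, v l * ∫ ω, u ω l ∂μ := by
  rw [integral_finset_sum _ (fun l _ => (hu1 l).const_mul (v l))]
  exact Finset.sum_congr rfl fun l _ => integral_const_mul _ _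

theorem cov_expand (u : Ω → Fin N → ℝ) (hu1 : ∀ i, Integrable (fun ω => u ω i) μ)
    (hu2 : ∀ i j, Integrable (fun ω => u ω i * u ω j) μ) (v w : Fin N → ℝ) :
    (∫ ω, (∑ l, v l * u ω l) * (∑ m, w m * u ω m) ∂μ)
      - (∫ ω, ∑ l, v l * u ω l ∂μ) * (∫ ω, ∑ m, w m * u ω m ∂μ)
    = ∑ l, ∑ m, v l * w m *
        ((∫ ω, u ω l * u ω m ∂μ) - (∫ ω, u ω l ∂μ) * (∫ ω, u ω m ∂μ)) := by
  have hprod : ∀ ω, (∑ l, v l * u ω l) * (∑ m, w m * u ω m)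
      = ∑ l, ∑ m, v l * w m * (u ω l * u ω m) := by
    intro ω
    rw [Finset.sum_mul_sum]
    exact Finset.sum_congr rfl fun l _ => Finset.sum_congr rfl fun m _ => by ring
  rw [integral_congr_ae (Filter.Eventually.of_forall hprod)]
  rw [integral_finset_sum _ (fun l _ => integrable_finset_sum _
    (fun m _ => (hu2 l m).const_mul (v l * w m)))]
  rw [Finset.sum_congr rfl (fun l _ => integral_finset_sum _
    (fun m _ => (hu2 l m).const_mul (v l * w m)))]
  rw [int_sum u hu1 v, int_sum u hu1 w, Finset.sum_mul_sum]
  rw [← Finset.sum_sub_distrib]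
  refine Finset.sum_congr rfl fun l _ => ?_
  rw [← Finset.sum_sub_distrib]
  refine Finset.sum_congr rfl fun m _ => ?_
  rw [integral_const_mul]
  ring


end Aux17

/-- for `q ∈ S₂` the residualized variables `X̃ q` and `X̃ i` are
uncorrelated. -/
theorem residualized_uncorrelated
    {Ω : Type*} [MeasurableSpace Ω] (μ : Measure Ω) [IsProbabilityMeasure μ]
    {N : ℕ} (A Sg : Matrix (Fin N) (Fin N) ℝ)
    (hA : ∀ i j : Fin N, i ≤ j → A i j = 0) (hSg : Sg.PosDef)
    (u X : Ω → Fin N → ℝ)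
    (hSEM : ∀ ω, X ω = A.mulVec (X ω) + u ω)
    (hu1 : ∀ i, Integrable (fun ω => u ω i) μ)
    (hu2 : ∀ i j, Integrable (fun ω => u ω i * u ω j) μ)
    (hcov : ∀ i j, ∫ ω, (u ω i - ∫ ω', u ω' i ∂μ) * (u ω j - ∫ ω', u ω' j ∂μ) ∂μ = Sg i j)
    (i : Fin N) (S : Set (Fin N)) (hiS : i ∉ S)
    (S₁ S₂ : Set (Fin N))
    (hS₂ : S₂ = {q ∈ S | ∀ p : (diagram A Sg).GPath, p.IsBackdoor q i →
      ADMG.Blocks (S \ {q}) p})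
    (hS₁ : S₁ = S \ S₂)
    (q : Fin N) (hq : q ∈ S₂)
    (Xq Xi : Ω → ℝ)
    (hXq : Xq = fun ω => X ω q -
      ∑ p, if p ∈ S₁ then ctrlEffect A (S₁ \ {p}) q p * X ω p else 0)
    (hXi : Xi = fun ω => X ω i -
      ∑ k, if k ∈ S then ctrlEffect A (S \ {k}) i k * X ω k else 0) :
    (∫ ω, Xq ω * Xi ω ∂μ) - (∫ ω, Xq ω ∂μ) * (∫ ω, Xi ω ∂μ) = 0 := by
  classical
  -- representation of X in terms of u
  have hX : ∀ ω, X ω = (Aux17.B A ∅).mulVec (u ω) := fun ω => Aux17.X_eq hA _ _ (hSEM ω)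
  have hctrl : ∀ (Z : Set (Fin N)) (a b : Fin N), ctrlEffect A Z a b = Aux17.B A Z a b := by
    intro Z a b
    unfold ctrlEffect
    rw [show (Matrix.of fun a b => if a ∈ Z then (0:ℝ) else A a b) = Aux17.Am A Z from rfl,
      Aux17.B_eq_inv hA]
  set v : Fin N → ℝ := fun l => if l ∈ S₁ then 0 else Aux17.B A S₁ q l with hv
  set w : Fin N → ℝ := fun l => if l ∈ S then 0 else Aux17.B A S i l with hw
  have hq1 : Xq = fun ω => ∑ l, v l * u ω l := by
    rw [hXq]
    funext ω
    have hrw : ∀ p : Fin N, (if p ∈ S₁ then ctrlEffect A (S₁ \ {p}) q p * X ω p else 0)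
        = (if p ∈ S₁ then Aux17.B A (S₁ \ {p}) q p * X ω p else 0) := by
      intro p
      rw [hctrl]
    rw [Finset.sum_congr rfl (fun p _ => hrw p)]
    exact Aux17.tilde_repr hA S₁ q (u ω) (X ω) (hX ω)
  have hi1 : Xi = fun ω => ∑ l, w l * u ω l := by
    rw [hXi]
    funext ω
    have hrw : ∀ k : Fin N, (if k ∈ S then ctrlEffect A (S \ {k}) i k * X ω k else 0)
        = (if k ∈ S then Aux17.B A (S \ {k}) i k * X ω k else 0) := by
      intro k
      rw [hctrl]
    rw [Finset.sum_congr rfl (fun k _ => hrw k)]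
    exact Aux17.tilde_repr hA S i (u ω) (X ω) (hX ω)
  rw [hq1, hi1]
  rw [Aux17.cov_expand u hu1 hu2 v w]
  apply Finset.sum_eq_zero
  intro l _
  apply Finset.sum_eq_zero
  intro m _
  have hSglm : (∫ ω, u ω l * u ω m ∂μ) - (∫ ω, u ω l ∂μ) * (∫ ω, u ω m ∂μ) = Sg l m := by
    rw [← Aux17.cov_uu u hu1 hu2 l m]
    exact hcov l m
  rw [hSglm]
  by_cases hvl : v l = 0
  · rw [hvl]; ring
  by_cases hwm : w m = 0
  · rw [hwm]; ring
  by_cases hsg : Sg l m = 0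
  · rw [hsg]; ring
  exfalso
  have hlS₁ : l ∉ S₁ := by
    intro hc
    exact hvl (by rw [hv]; simp [hc])
  have hmS : m ∉ S := by
    intro hc
    exact hwm (by rw [hw]; simp [hc])
  have hBl : Aux17.B A S₁ q l ≠ 0 := by
    rw [hv] at hvl
    simpa [hlS₁] using hvl
  have hBm : Aux17.B A S i m ≠ 0 := by
    rw [hw] at hwm
    simpa [hmS] using hwm
  exact Aux17.graph_contradiction hA i S S₁ S₂ hS₂ hS₁ q hq l m hlS₁ hmS hBl hBm hsg
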